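/- Let t ∈ (0, 1/2]. Then inf over λ > 0 of [C(λ)·t + λ·(1 - t)] = t + t·ln(1/(2t)), where C(λ) = λ - ln(2λ) for 0 < λ ≤ 1/2 and C(λ) = (1/2)e^{1-2λ} for λ ≥ 1/2. Moreover t + t·ln(1/(2t)) ≤ t·ln(e/(2t)), with equality. -/

import Mathlib

noncomputable def Cfun (l : ℝ) : ℝ :=
  if l ≤ 1/2 then l - Real.log (2*l) else (1/2) * Real.exp (1 - 2*l)

theorem optimize_EH (t : ℝ) (ht0 : 0 < t) (ht : t ≤ 1/2) :
    IsLeast ((fun l : ℝ => Cfun l * t + l * (1 - t)) '' Set.Ioi 0)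
      (t + t * Real.log (1/(2*t))) ∧
    t + t * Real.log (1/(2*t)) = t * Real.log (Real.exp 1/(2*t)) := by
  have h2t : (0:ℝ) < 2*t := by linarith
  have hlog : Real.log (1/(2*t)) = - Real.log (2*t) := by
    rw [one_div, Real.log_inv]
  constructor
  · constructor
    · refine ⟨t, ht0, ?_⟩
      simp only [Cfun, if_pos ht, hlog]
      ring
    · rintro y ⟨l, hl, rfl⟩
      simp only [Set.mem_Ioi] at hl
      rw [hlog]
      simp only [Cfun]
      split_ifs with h
      · -- l ≤ 1/2
        have hlt : Real.log (2*l) - Real.log (2*t) = Real.log (l/t) := by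
          rw [← Real.log_div (by positivity) (ne_of_gt h2t)]
          congr 1
          field_simp
        have hle : Real.log (l/t) ≤ l/t - 1 :=
          Real.log_le_sub_one_of_pos (by positivity)
        have key : t * Real.log (l/t) ≤ l - t := by
          have h1 := mul_le_mul_of_nonneg_left hle ht0.le
          have h2 : t * (l/t - 1) = l - t := by field_simp
          linarith [h1.trans_eq h2]
        have key2 : t * (Real.log (2*l) - Real.log (2*t)) ≤ l - t := by
          rw [hlt]; exact key
        nlinarith [key2]
      · -- l > 1/2
        push_neg at h
        have step1 : t - t * Real.log (2*t) ≤ 1/2 := by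
          have hle : Real.log (1/(2*t)) ≤ 1/(2*t) - 1 :=
            Real.log_le_sub_one_of_pos (by positivity)
          rw [hlog] at hle
          have h1 := mul_le_mul_of_nonneg_left hle ht0.le
          have h2 : t * (1/(2*t) - 1) = 1/2 - t := by field_simp
          nlinarith
        have hexp : (1 - 2*l) + 1 ≤ Real.exp (1 - 2*l) := Real.add_one_le_exp _
        nlinarith [mul_le_mul_of_nonneg_left hexp ht0.le]
  · rw [Real.log_div (Real.exp_ne_zero 1) (ne_of_gt h2t), Real.log_exp, hlog]
    ring
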